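/- For a finite action set A, Q : A → ℝ, and a probability distribution π on A with full support, the scaled reverse KL satisfies lim_{τ→0⁺} τ·KL(π ‖ B_τQ) = −∑_a π(a)Q(a) + max_a Q(a), where B_τQ(a) = exp(Q(a)/τ)/∑_b exp(Q(b)/τ). -/

import Mathlib

open Finset Filter

noncomputable def boltzmann {A : Type*} [Fintype A] (Q : A → ℝ) (τ : ℝ) (a : A) : ℝ :=
  Real.exp (Q a / τ) / ∑ b, Real.exp (Q b / τ)

/-- The scaled reverse KL to the Boltzmann distribution satisfies
`lim_{τ→0⁺} τ·KL(π ‖ B_τQ) = −∑ₐ π(a) Q(a) + maxₐ Q(a)`. -/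
theorem tau_rkl_limit {A : Type*} [Fintype A] [Nonempty A] (Q : A → ℝ)
    (π : A → ℝ) (hπ : ∀ a, 0 < π a) (hπ1 : ∑ a, π a = 1) :
    Tendsto (fun τ : ℝ => τ * ∑ a, π a * Real.log (π a / boltzmann Q τ a))
      (nhdsWithin 0 (Set.Ioi 0))
      (nhds (-(∑ a, π a * Q a) + Finset.univ.sup' Finset.univ_nonempty Q)) := by
  set M := Finset.univ.sup' Finset.univ_nonempty Q with hMdef
  obtain ⟨a0, -, ha0⟩ := Finset.exists_mem_eq_sup' Finset.univ_nonempty Q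
  set S' : ℝ → ℝ := fun τ => ∑ b, Real.exp ((Q b - M) / τ) with hS'def
  have hS'ge : ∀ τ : ℝ, 1 ≤ S' τ := by
    intro τ
    have h := Finset.single_le_sum (f := fun b => Real.exp ((Q b - M) / τ))
      (fun b _ => (Real.exp_pos _).le) (Finset.mem_univ a0)
    have : Real.exp ((Q a0 - M) / τ) = 1 := by
      rw [← ha0]; simp [hMdef]
    simpa [hS'def, this] using h
  have hS'le : ∀ τ ∈ Set.Ioi (0:ℝ), S' τ ≤ Fintype.card A := by
    intro τ hτ
    have : S' τ ≤ ∑ _b : A, (1:ℝ) := by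
      apply Finset.sum_le_sum
      intro b _
      rw [Real.exp_le_one_iff]
      apply div_nonpos_of_nonpos_of_nonneg
      · have : Q b ≤ M := Finset.le_sup' Q (Finset.mem_univ b)
        linarith
      · exact le_of_lt hτ
    simpa using this
  -- squeeze: τ * log (S' τ) → 0
  have hsq : Tendsto (fun τ => τ * Real.log (S' τ)) (nhdsWithin 0 (Set.Ioi 0)) (nhds 0) := by
    apply tendsto_of_tendsto_of_tendsto_of_le_of_le' (g := fun _ => (0:ℝ))
      (h := fun τ => τ * Real.log (Fintype.card A)) tendsto_const_nhds
    · have : Tendsto (fun τ : ℝ => τ * Real.log (Fintype.card A)) (nhds 0)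
        (nhds (0 * Real.log (Fintype.card A))) :=
        (continuous_id.mul continuous_const).tendsto 0
      simpa using this.mono_left nhdsWithin_le_nhds
    · filter_upwards [self_mem_nhdsWithin] with τ hτ
      have h1 : 0 ≤ Real.log (S' τ) := Real.log_nonneg (hS'ge τ)
      exact mul_nonneg (le_of_lt hτ) h1
    · filter_upwards [self_mem_nhdsWithin] with τ hτ
      have h1 : Real.log (S' τ) ≤ Real.log (Fintype.card A) :=
        Real.log_le_log (by linarith [hS'ge τ]) (hS'le τ hτ)
      exact mul_le_mul_of_nonneg_left h1 (le_of_lt hτ)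
  -- entropy term: τ * ∑ π log π → 0
  have hent : Tendsto (fun τ : ℝ => τ * ∑ a, π a * Real.log (π a))
      (nhdsWithin 0 (Set.Ioi 0)) (nhds 0) := by
    have : Tendsto (fun τ : ℝ => τ * ∑ a, π a * Real.log (π a)) (nhds 0)
        (nhds (0 * ∑ a, π a * Real.log (π a))) :=
      (continuous_id.mul continuous_const).tendsto 0
    simpa using this.mono_left nhdsWithin_le_nhds
  have key : ∀ τ ∈ Set.Ioi (0:ℝ),
      τ * ∑ a, π a * Real.log (π a / boltzmann Q τ a) =
      τ * (∑ a, π a * Real.log (π a)) + (-(∑ a, π a * Q a) + M) + τ * Real.log (S' τ) := by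
    intro τ hτ
    have hτ0 : (τ:ℝ) ≠ 0 := ne_of_gt hτ
    have hSpos : 0 < ∑ b, Real.exp (Q b / τ) :=
      Finset.sum_pos (fun b _ => Real.exp_pos _) Finset.univ_nonempty
    have hsplit : ∑ b, Real.exp (Q b / τ) = Real.exp (M / τ) * S' τ := by
      rw [hS'def, Finset.mul_sum]
      apply Finset.sum_congr rfl
      intro b _
      rw [← Real.exp_add]
      congr 1
      field_simp
      ring
    have hS'pos : (0:ℝ) < S' τ := lt_of_lt_of_le one_pos (hS'ge τ)
    have hlogS : Real.log (∑ b, Real.exp (Q b / τ)) = M / τ + Real.log (S' τ) := by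
      rw [hsplit, Real.log_mul (Real.exp_ne_zero _) (ne_of_gt hS'pos), Real.log_exp]
    have hlog : ∀ a, Real.log (π a / boltzmann Q τ a) =
        Real.log (π a) - Q a / τ + (M / τ + Real.log (S' τ)) := by
      intro a
      rw [boltzmann, Real.log_div (ne_of_gt (hπ a))
        (ne_of_gt (div_pos (Real.exp_pos _) hSpos)),
        Real.log_div (Real.exp_ne_zero _) (ne_of_gt hSpos), Real.log_exp, hlogS]
      ring
    rw [Finset.mul_sum]
    have hterm : ∀ a, τ * (π a * Real.log (π a / boltzmann Q τ a)) =
        τ * (π a * Real.log (π a)) - π a * Q a + π a * (M + τ * Real.log (S' τ)) := by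
      intro a
      rw [hlog a]
      field_simp
    rw [Finset.sum_congr rfl (fun a _ => hterm a), Finset.sum_add_distrib,
      Finset.sum_sub_distrib, ← Finset.mul_sum, ← Finset.sum_mul, hπ1, one_mul]
    ring
  have heq : (fun τ : ℝ => τ * ∑ a, π a * Real.log (π a / boltzmann Q τ a)) =ᶠ[nhdsWithin 0 (Set.Ioi 0)]
      (fun τ => τ * (∑ a, π a * Real.log (π a)) + (-(∑ a, π a * Q a) + M) + τ * Real.log (S' τ)) := by
    filter_upwards [self_mem_nhdsWithin] with τ hτ using key τ hτ
  have hfinal := (hent.add (tendsto_const_nhds (x := -(∑ a, π a * Q a) + M))).add hsq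
  simp only [zero_add, add_zero] at hfinal
  exact Tendsto.congr' heq.symm hfinal
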